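/- Let (X, ν) be a probability space, q > 1 a real number, and g : X → [0, N] a measurable function (N ≥ 0 real). Suppose there are constants c, C > 0 and D ≥ 0 such that ν{x : g(x) ≥ t} ≤ C·q^{-t} for all t ≥ 0, and ν{x : g(x) ≥ t} ≥ c·q^{-t} for all 0 ≤ t ≤ N − D. Then there exist constants c', C' > 0 depending only on c, C, D, q such that c'·(N+1) ≤ ∫_X q^{g(x)} dν(x) ≤ C'·(N+1). -/

import Mathlib

open MeasureTheory

open Finset in
lemma indicator_telescope_sum {X : Type} (g : X → ℝ) (x : X) (K : ℕ) (f : ℕ → ℝ) :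
    ∑ j ∈ range K, Set.indicator {y | ((j : ℝ) + 1) ≤ g y} (fun _ => f (j+1) - f j) x
      = f (min K ⌊g x⌋₊) - f 0 := by
  have key : ∀ j : ℕ, (x ∈ {y | ((j : ℝ) + 1) ≤ g y}) ↔ j < ⌊g x⌋₊ := by
    intro j
    simp only [Set.mem_setOf_eq]
    rw [show ((j : ℝ) + 1) = ((j + 1 : ℕ) : ℝ) by push_cast; ring,
      ← Nat.le_floor_iff' (Nat.succ_ne_zero j)]
    omega
  have h1 : ∑ j ∈ range K, Set.indicator {y | ((j : ℝ) + 1) ≤ g y} (fun _ => f (j+1) - f j) x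
      = ∑ j ∈ range (min K ⌊g x⌋₊), (f (j+1) - f j) := by
    rw [← Finset.sum_subset (Finset.range_subset_range.2 (min_le_left K ⌊g x⌋₊))]
    · refine Finset.sum_congr rfl fun j hj => Set.indicator_of_mem ?_ _
      rw [key]
      have := Finset.mem_range.1 hj
      omega
    · intro j hj hj'
      refine Set.indicator_of_notMem ?_ _
      rw [key]
      have h1 := Finset.mem_range.1 hj
      simp only [Finset.mem_range] at hj'
      omega
  rw [h1, Finset.sum_range_sub]

/-- Let `(X, ν)` be a probability space, `q > 1`, and `g : X → [0, N]` measurable.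
If `ν{g ≥ t} ≤ C·q^{-t}` for all `t ≥ 0` and `ν{g ≥ t} ≥ c·q^{-t}` for all
`0 ≤ t ≤ N − D`, then `∫ q^g dν ≍ N + 1`, with constants depending only on
`c, C, D, q`. -/
theorem integral_rpow_comparable_of_tail_bounds
    (q c C D : ℝ) (hq : 1 < q) (hc : 0 < c) (hC : 0 < C) (hD : 0 ≤ D) :
    ∃ c' C' : ℝ, 0 < c' ∧ 0 < C' ∧
      ∀ (X : Type) (_ : MeasurableSpace X) (ν : Measure X), IsProbabilityMeasure ν →
        ∀ (N : ℝ) (g : X → ℝ), 0 ≤ N → Measurable g →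
          (∀ x, 0 ≤ g x ∧ g x ≤ N) →
          (∀ t : ℝ, 0 ≤ t → (ν {x | t ≤ g x}).toReal ≤ C * q ^ (-t)) →
          (∀ t : ℝ, 0 ≤ t → t ≤ N - D → c * q ^ (-t) ≤ (ν {x | t ≤ g x}).toReal) →
          c' * (N + 1) ≤ ∫ x, q ^ (g x) ∂ν ∧ ∫ x, q ^ (g x) ∂ν ≤ C' * (N + 1) := by
  have hq0 : (0:ℝ) < q := lt_trans one_pos hq
  have hq1 : (0:ℝ) < q - 1 := by linarith
  set κ : ℝ := c * (q - 1) / q with hκdef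
  have hκ : 0 < κ := by positivity
  refine ⟨min (1/(2*D+4)) (κ/2), q + C*(q-1), lt_min (by positivity) (by positivity),
    by positivity, ?_⟩
  intro X mX ν hν N g hN hg hrange hup hlow
  -- measurable sets
  have hSmeas : ∀ j : ℕ, MeasurableSet {y | ((j:ℝ)+1) ≤ g y} :=
    fun j => measurableSet_le measurable_const hg
  have hInd : ∀ (j : ℕ) (e : ℝ),
      Integrable (fun x => Set.indicator {y | ((j:ℝ)+1) ≤ g y} (fun _ => e) x) ν :=
    fun j e => (integrable_const e).indicator (hSmeas j)
  have hIndInt : ∀ (j : ℕ) (e : ℝ),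
      ∫ x, Set.indicator {y | ((j:ℝ)+1) ≤ g y} (fun _ => e) x ∂ν
        = (ν {y | ((j:ℝ)+1) ≤ g y}).toReal * e := by
    intro j e
    rw [integral_indicator_const e (hSmeas j), smul_eq_mul, measureReal_def]
  -- integrability of q ^ g
  have hFeq : (fun x => q ^ g x) = fun x => Real.exp (Real.log q * g x) :=
    funext fun x => Real.rpow_def_of_pos hq0 _
  have hFmeas : Measurable fun x => q ^ g x := by
    rw [hFeq]; exact Real.measurable_exp.comp (measurable_const.mul hg)
  have hFint : Integrable (fun x => q ^ g x) ν := by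
    refine ⟨hFmeas.aestronglyMeasurable, ?_⟩
    apply HasFiniteIntegral.of_bounded (C := q ^ N)
    filter_upwards with x
    rw [Real.norm_eq_abs, abs_of_pos (Real.rpow_pos_of_pos hq0 _)]
    exact Real.rpow_le_rpow_of_exponent_le hq.le (hrange x).2
  constructor
  · -- lower bound
    set M : ℕ := ⌊N - D⌋₊ with hMdef
    have hMle : ∀ j : ℕ, j < M → ((j:ℝ) + 1) ≤ N - D := by
      intro j hj
      have h0 : (0:ℝ) ≤ N - D := by
        by_contra h
        push_neg at h
        have : M = 0 := Nat.floor_eq_zero.2 (by linarith)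
        omega
      have h1 : (M : ℝ) ≤ N - D := Nat.floor_le h0
      have h2 : ((j:ℝ) + 1) ≤ (M:ℝ) := by exact_mod_cast hj
      linarith
    have hptw : ∀ x, (1:ℝ) + ∑ j ∈ Finset.range M,
        Set.indicator {y | ((j:ℝ)+1) ≤ g y} (fun _ => q^(j+1) - q^j) x ≤ q ^ g x := by
      intro x
      have := indicator_telescope_sum g x M (fun j => q ^ j)
      rw [this, pow_zero]
      have h1 : q ^ (min M ⌊g x⌋₊) ≤ q ^ ⌊g x⌋₊ :=
        pow_le_pow_right₀ hq.le (min_le_right _ _)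
      have h2 : (q:ℝ) ^ (⌊g x⌋₊ : ℕ) ≤ q ^ g x := by
        rw [← Real.rpow_natCast q ⌊g x⌋₊]
        exact Real.rpow_le_rpow_of_exponent_le hq.le (Nat.floor_le (hrange x).1)
      linarith
    have hint : Integrable (fun x => (1:ℝ) + ∑ j ∈ Finset.range M,
        Set.indicator {y | ((j:ℝ)+1) ≤ g y} (fun _ => q^(j+1) - q^j) x) ν :=
      (integrable_const 1).add (integrable_finset_sum _ (fun j _ => hInd j _))
    have hmono := integral_mono hint hFint hptw
    refine le_trans ?_ hmono
    rw [integral_add (integrable_const 1) (integrable_finset_sum _ (fun j _ => hInd j _)),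
      integral_const, integral_finset_sum _ (fun j _ => hInd j _)]
    simp only [measureReal_def, measure_univ, ENNReal.toReal_one, smul_eq_mul, one_mul]
    have hterm : ∀ j ∈ Finset.range M,
        κ ≤ ∫ x, Set.indicator {y | ((j:ℝ)+1) ≤ g y} (fun _ => q^(j+1) - q^j) x ∂ν := by
      intro j hj
      rw [hIndInt]
      have he : (0:ℝ) ≤ q^(j+1) - q^j := by
        have := pow_le_pow_right₀ hq.le (show j ≤ j+1 by omega)
        linarith
      have h1 := hlow ((j:ℝ)+1) (by positivity) (hMle j (Finset.mem_range.1 hj))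
      have h2 : c * q ^ (-((j:ℝ)+1)) * (q^(j+1) - q^j)
          ≤ (ν {y | ((j:ℝ)+1) ≤ g y}).toReal * (q^(j+1) - q^j) :=
        mul_le_mul_of_nonneg_right h1 he
      refine le_trans (le_of_eq ?_) h2
      rw [show (-((j:ℝ)+1)) = -(((j+1:ℕ):ℝ)) by push_cast; ring, Real.rpow_neg hq0.le,
        Real.rpow_natCast, hκdef]
      have hqj : (q:ℝ) ^ (j+1) ≠ 0 := by positivity
      field_simp
      ring
    have hsum : (M:ℝ) * κ ≤ ∑ j ∈ Finset.range M,
        ∫ x, Set.indicator {y | ((j:ℝ)+1) ≤ g y} (fun _ => q^(j+1) - q^j) x ∂ν := by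
      calc (M:ℝ) * κ = ∑ _j ∈ Finset.range M, κ := by
            rw [Finset.sum_const, Finset.card_range, nsmul_eq_mul]
        _ ≤ _ := Finset.sum_le_sum hterm
    have hM : N - D - 1 < (M:ℝ) := by
      have := Nat.lt_floor_add_one (N - D)
      simp only [hMdef] at *
      linarith
    have hM0 : (0:ℝ) ≤ (M:ℝ) := Nat.cast_nonneg M
    rcases le_or_gt N (2*D+3) with hcase | hcase
    · have h1 : min (1/(2*D+4)) (κ/2) * (N+1) ≤ (1/(2*D+4)) * (N+1) :=
        mul_le_mul_of_nonneg_right (min_le_left _ _) (by linarith)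
      have h2 : (1/(2*D+4)) * (N+1) ≤ 1 := by
        rw [div_mul_eq_mul_div, div_le_one (by linarith)]
        linarith
      nlinarith [mul_nonneg hM0 hκ.le]
    · have h1 : min (1/(2*D+4)) (κ/2) * (N+1) ≤ (κ/2) * (N+1) :=
        mul_le_mul_of_nonneg_right (min_le_right _ _) (by linarith)
      have h3 : κ * (N - D - 1) ≤ κ * (M:ℝ) :=
        mul_le_mul_of_nonneg_left hM.le hκ.le
      have h4 : (0:ℝ) ≤ κ * (N - 2*D - 3) := mul_nonneg hκ.le (by linarith)
      nlinarith
  · -- upper bound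
    set K : ℕ := ⌈N⌉₊ with hKdef
    have hptw : ∀ x, q ^ g x ≤ q + ∑ j ∈ Finset.range K,
        Set.indicator {y | ((j:ℝ)+1) ≤ g y} (fun _ => q^(j+2) - q^(j+1)) x := by
      intro x
      have ht := indicator_telescope_sum g x K (fun j => q ^ (j+1))
      rw [ht]
      have hmK : ⌊g x⌋₊ ≤ K := le_trans (Nat.floor_le_floor (hrange x).2) (Nat.floor_le_ceil N)
      rw [min_eq_right hmK]
      have h2 : q ^ g x ≤ (q:ℝ) ^ (⌊g x⌋₊ + 1 : ℕ) := by
        rw [← Real.rpow_natCast q (⌊g x⌋₊+1)]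
        apply Real.rpow_le_rpow_of_exponent_le hq.le
        push_cast
        exact (Nat.lt_floor_add_one (g x)).le
      have h3 : (q:ℝ)^(0+1) = q := by norm_num
      linarith
    have hintsum : Integrable (fun x => ∑ j ∈ Finset.range K,
        Set.indicator {y | ((j:ℝ)+1) ≤ g y} (fun _ => q^(j+2) - q^(j+1)) x) ν :=
      integrable_finset_sum _ (fun j _ => hInd j _)
    have hint : Integrable (fun x => q + ∑ j ∈ Finset.range K,
        Set.indicator {y | ((j:ℝ)+1) ≤ g y} (fun _ => q^(j+2) - q^(j+1)) x) ν :=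
      (integrable_const q).add hintsum
    refine le_trans (integral_mono hFint hint hptw) ?_
    rw [integral_add (integrable_const q) hintsum, integral_const,
      integral_finset_sum _ (fun j _ => hInd j _)]
    simp only [measureReal_def, measure_univ, ENNReal.toReal_one, smul_eq_mul, one_mul]
    have hterm : ∀ j ∈ Finset.range K,
        ∫ x, Set.indicator {y | ((j:ℝ)+1) ≤ g y} (fun _ => q^(j+2) - q^(j+1)) x ∂ν
          ≤ C*(q-1) := by
      intro j hj
      rw [hIndInt]
      have he : (0:ℝ) ≤ q^(j+2) - q^(j+1) := by
        have := pow_le_pow_right₀ hq.le (show j+1 ≤ j+2 by omega)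
        linarith
      have h1 := hup ((j:ℝ)+1) (by positivity)
      have h2 : (ν {y | ((j:ℝ)+1) ≤ g y}).toReal * (q^(j+2) - q^(j+1))
          ≤ C * q ^ (-((j:ℝ)+1)) * (q^(j+2) - q^(j+1)) :=
        mul_le_mul_of_nonneg_right h1 he
      refine le_trans h2 (le_of_eq ?_)
      rw [show (-((j:ℝ)+1)) = -(((j+1:ℕ):ℝ)) by push_cast; ring, Real.rpow_neg hq0.le,
        Real.rpow_natCast]
      have hqj : (q:ℝ) ^ (j+1) ≠ 0 := by positivity
      field_simp
      ring
    have hsum : ∑ j ∈ Finset.range K,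
        ∫ x, Set.indicator {y | ((j:ℝ)+1) ≤ g y} (fun _ => q^(j+2) - q^(j+1)) x ∂ν
          ≤ (K:ℝ) * (C*(q-1)) := by
      calc _ ≤ ∑ _j ∈ Finset.range K, C*(q-1) := Finset.sum_le_sum hterm
        _ = (K:ℝ) * (C*(q-1)) := by
            rw [Finset.sum_const, Finset.card_range, nsmul_eq_mul]
    have hK : (K:ℝ) ≤ N + 1 := by
      have := Nat.ceil_lt_add_one hN
      simp only [hKdef]
      linarith
    have hK0 : (0:ℝ) ≤ (K:ℝ) := Nat.cast_nonneg K
    have h5 : (K:ℝ) * (C*(q-1)) ≤ (N+1) * (C*(q-1)) :=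
      mul_le_mul_of_nonneg_right hK (by positivity)
    nlinarith
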